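/- The function I₃ = x₁⁴ + 2(x₂²+x₄²)x₁² + 4x₂x₄x₆x₁ + x₂⁴ + x₃⁴ + x₄⁴ + x₅⁴ + x₆⁴ + 2x₃²x₅² + 2x₃²x₆² + 2x₄²x₆² + 2x₅²x₆² + 2x₂²(x₃²+x₅²+x₆²) is a first integral of the vector field X: Σᵢ (∂I₃/∂xᵢ)·Xᵢ = 0 at every point of the unit sphere x₁²+…+x₆² = 1. -/

import Mathlib

theorem stmt6 (x₁ x₂ x₃ x₄ x₅ x₆ : ℝ)
    (X₁ X₂ X₃ X₄ X₅ X₆ : ℝ)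
    (hX₁ : X₁ = x₂ * (x₁^2 - x₄^2))
    (hX₂ : X₂ = -x₁^3 + (x₃^2 + x₄^2 + x₅^2) * x₁ + 2 * x₃ * x₄ * x₅)
    (hX₃ : X₃ = (x₃ * x₄ + x₁ * x₅) * x₆ - x₂ * (x₁ * x₃ + x₄ * x₅))
    (hX₄ : X₄ = (x₁^2 - x₄^2) * x₆)
    (hX₅ : X₅ = (x₁ * x₃ + x₄ * x₅) * x₆ - x₂ * (x₃ * x₄ + x₁ * x₅))
    (hX₆ : X₆ = 2 * x₄^3 + (x₂^2 + x₆^2 - 1) * x₄ - 2 * x₁ * x₃ * x₅)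
    (h : x₁^2 + x₂^2 + x₃^2 + x₄^2 + x₅^2 + x₆^2 = 1) :
    deriv (fun t : ℝ =>
      (x₁ + t * X₁)^4
      + 2 * ((x₂ + t * X₂)^2 + (x₄ + t * X₄)^2) * (x₁ + t * X₁)^2
      + 4 * (x₂ + t * X₂) * (x₄ + t * X₄) * (x₆ + t * X₆) * (x₁ + t * X₁)
      + (x₂ + t * X₂)^4 + (x₃ + t * X₃)^4 + (x₄ + t * X₄)^4 + (x₅ + t * X₅)^4 + (x₆ + t * X₆)^4
      + 2 * (x₃ + t * X₃)^2 * (x₅ + t * X₅)^2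
      + 2 * (x₃ + t * X₃)^2 * (x₆ + t * X₆)^2
      + 2 * (x₄ + t * X₄)^2 * (x₆ + t * X₆)^2
      + 2 * (x₅ + t * X₅)^2 * (x₆ + t * X₆)^2
      + 2 * (x₂ + t * X₂)^2 * ((x₃ + t * X₃)^2 + (x₅ + t * X₅)^2 + (x₆ + t * X₆)^2)) 0 = 0 := by
  have h1 : ∀ a b : ℝ, HasDerivAt (fun t : ℝ => a + t * b) b 0 := by
    intro a b
    simpa using (((hasDerivAt_id (0:ℝ)).mul_const b).const_add a)
  have hd :=
    ((h1 x₁ X₁).pow 4)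
      |>.add (((((h1 x₂ X₂).pow 2).add ((h1 x₄ X₄).pow 2)).const_mul 2).mul ((h1 x₁ X₁).pow 2))
      |>.add (((((h1 x₂ X₂).const_mul 4).mul (h1 x₄ X₄)).mul (h1 x₆ X₆)).mul (h1 x₁ X₁))
      |>.add ((h1 x₂ X₂).pow 4)
      |>.add ((h1 x₃ X₃).pow 4)
      |>.add ((h1 x₄ X₄).pow 4)
      |>.add ((h1 x₅ X₅).pow 4)
      |>.add ((h1 x₆ X₆).pow 4)
      |>.add ((((h1 x₃ X₃).pow 2).const_mul 2).mul ((h1 x₅ X₅).pow 2))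
      |>.add ((((h1 x₃ X₃).pow 2).const_mul 2).mul ((h1 x₆ X₆).pow 2))
      |>.add ((((h1 x₄ X₄).pow 2).const_mul 2).mul ((h1 x₆ X₆).pow 2))
      |>.add ((((h1 x₅ X₅).pow 2).const_mul 2).mul ((h1 x₆ X₆).pow 2))
      |>.add ((((h1 x₂ X₂).pow 2).const_mul 2).mul
        ((((h1 x₃ X₃).pow 2).add ((h1 x₅ X₅).pow 2)).add ((h1 x₆ X₆).pow 2)))
  erw [hd.deriv]
  simp only [Pi.pow_apply, Pi.add_apply, Pi.mul_apply]
  subst hX₁ hX₂ hX₃ hX₄ hX₅ hX₆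
  linear_combination (4*x₄*x₆^3 + 4*x₄*x₅^2*x₆ + 4*x₄^3*x₆ + 4*x₃^2*x₄*x₆ + 4*x₂^2*x₄*x₆ + 4*x₁*x₂*x₄^2) * h
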